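/- Let p ≥ 1, let T_p be an invertible p×p matrix over F₂, let n ≥ 0, and set G = T₂^{⊗n} ⊗ T_p with N = 2^n·p. For every K with 1 ≤ K ≤ N, let V(K) denote the K-th largest element (with multiplicity) of the multiset { S_{T₂^{⊗n}}(i) · S_{T_p}(j) : 1 ≤ i ≤ 2^n, 1 ≤ j ≤ p }. Then for every subset I ⊆ {0,…,N−1} of size K one has d_G(I) ≤ V(K), i.e., no choice of K rows of G spans a code of minimum distance exceeding V(K). -/

import Mathlib

open Matrix

noncomputable section

abbrev F2 : Type := ZMod 2

/-- The Arikan kernel `T₂ = ((1,0),(1,1))` over `F₂`. -/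
def T2 : Matrix (Fin 2) (Fin 2) F2 := !![1, 0; 1, 1]

/-- Kronecker product of `Fin`-indexed square matrices, with the standard index
convention `(A ⊗ B) i j = A (i / n) (j / n) * B (i % n) (j % n)`. -/
def kron {m n : ℕ} (A : Matrix (Fin m) (Fin m) F2) (B : Matrix (Fin n) (Fin n) F2) :
    Matrix (Fin (m * n)) (Fin (m * n)) F2 :=
  fun i j => A i.divNat j.divNat * B i.modNat j.modNat

/-- The `n`-fold Kronecker power of `T₂` (with `T₂^{⊗0}` the 1×1 identity). -/
def T2pow : (n : ℕ) → Matrix (Fin (2 ^ n)) (Fin (2 ^ n)) F2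
  | 0 => 1
  | n + 1 => (kron T2 (T2pow n)).submatrix
      (Fin.cast (by rw [pow_succ, Nat.mul_comm]))
      (Fin.cast (by rw [pow_succ, Nat.mul_comm]))

/-- Minimum distance `d_G(I)`: the minimum Hamming weight of `u · G` over all
nonzero row vectors `u` with support contained in `I`. -/
def minDist {N : ℕ} (G : Matrix (Fin N) (Fin N) F2) (I : Finset (Fin N)) : ℕ :=
  sInf {w | ∃ u : Fin N → F2, u ≠ 0 ∧ (∀ i, u i ≠ 0 → i ∈ I) ∧
    hammingNorm (Matrix.vecMul u G) = w}

/-- Minimum-distance spectrum `S_G(K)`: the maximum of `d_G(I)` over all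
row-index sets `I` of size `K`. -/
def spec {N : ℕ} (G : Matrix (Fin N) (Fin N) F2) (K : ℕ) : ℕ :=
  sSup {d | ∃ I : Finset (Fin N), I.card = K ∧ minDist G I = d}

/-- `K`-th largest element (1-indexed, counted with multiplicity) of a
multiset of natural numbers. -/
def kthLargest (s : Multiset ℕ) (K : ℕ) : ℕ :=
  ((s.sort (· ≤ ·)).reverse).getD (K - 1) 0

/-! ### Counting characterizations of `kthLargest` -/

def cnt (m : ℕ) (s : Multiset ℕ) : ℕ := Multiset.countP (fun x => m ≤ x) s

lemma desc_sorted (s : Multiset ℕ) :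
    List.Pairwise (fun a b => b ≤ a) ((s.sort (· ≤ ·)).reverse) := by
  rw [List.pairwise_reverse]
  exact Multiset.pairwise_sort s _

lemma desc_getD_antitone (s : Multiset ℕ) {i j : ℕ} (hij : i ≤ j) :
    ((s.sort (· ≤ ·)).reverse).getD j 0 ≤ ((s.sort (· ≤ ·)).reverse).getD i 0 := by
  set L := (s.sort (· ≤ ·)).reverse with hL
  by_cases hj : j < L.length
  · have hi : i < L.length := lt_of_le_of_lt hij hj
    rw [List.getD_eq_getElem _ _ hj, List.getD_eq_getElem _ _ hi]
    rcases eq_or_lt_of_le hij with rfl | hij'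
    · exact le_refl _
    · exact (List.pairwise_iff_getElem.mp (desc_sorted s)) i j hi hj hij'
  · rw [List.getD_eq_default _ _ (le_of_not_gt hj)]
    exact Nat.zero_le _

lemma cnt_coe (m : ℕ) (l : List ℕ) : cnt m (↑l) = l.countP (fun x => decide (m ≤ x)) := rfl

lemma cnt_eq_list (m : ℕ) (s : Multiset ℕ) :
    cnt m s = ((s.sort (· ≤ ·)).reverse).countP (fun x => decide (m ≤ x)) := by
  have h1 : cnt m s = cnt m (↑(s.sort (· ≤ ·))) := by rw [Multiset.sort_eq]
  rw [h1, cnt_coe]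
  exact (List.Perm.countP_eq _ (List.reverse_perm _)).symm

lemma length_desc (s : Multiset ℕ) : ((s.sort (· ≤ ·)).reverse).length = Multiset.card s := by
  rw [List.length_reverse, Multiset.length_sort]

lemma le_kthLargest_of_cnt {m K : ℕ} {s : Multiset ℕ} (hK : 1 ≤ K) (h : K ≤ cnt m s) :
    m ≤ kthLargest s K := by
  by_contra hlt
  push_neg at hlt
  rw [cnt_eq_list] at h
  set L := (s.sort (· ≤ ·)).reverse with hL
  have hsplit : L.countP (fun x => decide (m ≤ x)) =
      (L.take (K-1)).countP (fun x => decide (m ≤ x)) +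
      (L.drop (K-1)).countP (fun x => decide (m ≤ x)) := by
    rw [← List.countP_append, List.take_append_drop]
  have h2 : (L.drop (K-1)).countP (fun x => decide (m ≤ x)) = 0 := by
    rw [List.countP_eq_zero]
    intro x hx
    rw [List.mem_iff_getElem] at hx
    obtain ⟨t, ht, rfl⟩ := hx
    have hlen : (K-1) + t < L.length := by
      have h5 : (L.drop (K-1)).length = L.length - (K-1) := List.length_drop; omega
    have heq : (L.drop (K-1))[t] = L[(K-1)+t]'hlen := by
      rw [List.getElem_drop]
    have hle : L.getD ((K-1)+t) 0 ≤ L.getD (K-1) 0 := desc_getD_antitone s (Nat.le_add_right _ _)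
    rw [List.getD_eq_getElem _ _ hlen] at hle
    have hkth : L.getD (K-1) 0 = kthLargest s K := rfl
    simp only [heq, decide_eq_true_eq]
    omega
  have h3 : (L.take (K-1)).countP (fun x => decide (m ≤ x)) ≤ K - 1 :=
    le_trans List.countP_le_length (by simp [List.length_take])
  omega

lemma cnt_ge_of_le_kthLargest {m K : ℕ} {s : Multiset ℕ} (hcard : K ≤ Multiset.card s)
    (h : m ≤ kthLargest s K) : K ≤ cnt m s := by
  rcases Nat.eq_zero_or_pos K with rfl | hK
  · exact Nat.zero_le _
  rw [cnt_eq_list]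
  set L := (s.sort (· ≤ ·)).reverse with hL
  have hlen : L.length = Multiset.card s := length_desc s
  have htake : ∀ x ∈ L.take K, m ≤ x := by
    intro x hx
    rw [List.mem_iff_getElem] at hx
    obtain ⟨t, ht, rfl⟩ := hx
    have ht' : t < K := by
      have h5 : (L.take K).length = min K L.length := List.length_take
      omega
    have htL : t < L.length := by
      have h5 : (L.take K).length = min K L.length := List.length_take; omega
    have hmono : L.getD (K-1) 0 ≤ L.getD t 0 := desc_getD_antitone s (by omega)
    rw [List.getD_eq_getElem _ _ htL, List.getD_eq_getElem _ _ (by omega : K-1 < L.length)] at hmono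
    have hkth : m ≤ L.getD (K-1) 0 := h
    rw [List.getD_eq_getElem _ _ (by omega : K-1 < L.length)] at hkth
    have hget : (L.take K)[t] = L[t]'htL := List.getElem_take
    omega
  have h1 : (L.take K).countP (fun x => decide (m ≤ x)) = (L.take K).length := by
    rw [List.countP_eq_length]
    intro a ha; simpa using htake a ha
  have h2 : (L.take K).length = K := by
    rw [List.length_take]; omega
  calc K = (L.take K).countP (fun x => decide (m ≤ x)) := by rw [h1, h2]
  _ ≤ L.countP (fun x => decide (m ≤ x)) := by
      conv_rhs => rw [← List.take_append_drop K L]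
      rw [List.countP_append]; omega

lemma cnt_mono_left {m m' : ℕ} (h : m ≤ m') (s : Multiset ℕ) : cnt m' s ≤ cnt m s := by
  refine Quotient.inductionOn s (fun l => ?_)
  exact List.countP_mono_left (fun x _ hx => by simp at hx ⊢; omega)

/-! ### Hamming norm and vecMul basics -/

lemma hn_eq {k : ℕ} (x : Fin k → F2) :
    hammingNorm x = (Finset.univ.filter (fun i => x i ≠ 0)).card := by
  simp [hammingNorm]

lemma vecMul_apply {k : ℕ} (v : Fin k → F2) (M : Matrix (Fin k) (Fin k) F2) (j : Fin k) :
    Matrix.vecMul v M j = ∑ i, v i * M i j := by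
  simp [Matrix.vecMul, dotProduct]

lemma T2_eval (a b : Fin 2) : T2 a b = if a = 0 ∧ b = 1 then 0 else 1 := by
  fin_cases a <;> fin_cases b <;> simp [T2]

/-! ### minDist generalities -/

lemma minDistSet_nonempty {N : ℕ} (G : Matrix (Fin N) (Fin N) F2) (I : Finset (Fin N))
    (hI : I.Nonempty) : {w | ∃ u : Fin N → F2, u ≠ 0 ∧ (∀ i, u i ≠ 0 → i ∈ I) ∧
      hammingNorm (Matrix.vecMul u G) = w}.Nonempty := by
  obtain ⟨i0, hi0⟩ := hI
  refine ⟨_, Pi.single i0 1, ?_, ?_, rfl⟩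
  · intro h
    have := congrFun h i0
    rw [Pi.single_eq_same] at this
    exact one_ne_zero this
  · intro i hi
    by_contra hne
    rw [Pi.single_eq_of_ne (fun hh => hne (by rw [hh]; exact hi0)) 1] at hi
    exact hi rfl

lemma minDist_le_norm {N : ℕ} (G : Matrix (Fin N) (Fin N) F2) (I : Finset (Fin N))
    (u : Fin N → F2) (hu : u ≠ 0) (hsupp : ∀ i, u i ≠ 0 → i ∈ I) :
    minDist G I ≤ hammingNorm (Matrix.vecMul u G) :=
  Nat.sInf_le ⟨u, hu, hsupp, rfl⟩

lemma minDist_attained {N : ℕ} (G : Matrix (Fin N) (Fin N) F2) (I : Finset (Fin N))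
    (hI : I.Nonempty) : ∃ u : Fin N → F2, u ≠ 0 ∧ (∀ i, u i ≠ 0 → i ∈ I) ∧
      hammingNorm (Matrix.vecMul u G) = minDist G I := by
  have := Nat.sInf_mem (minDistSet_nonempty G I hI)
  exact this

lemma minDist_le_N {N : ℕ} (G : Matrix (Fin N) (Fin N) F2) (I : Finset (Fin N))
    (hI : I.Nonempty) : minDist G I ≤ N := by
  obtain ⟨i0, hi0⟩ := hI
  have h1 : minDist G I ≤ hammingNorm (Matrix.vecMul (Pi.single i0 1) G) := by
    apply minDist_le_norm
    · intro h
      have := congrFun h i0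
      rw [Pi.single_eq_same] at this
      exact one_ne_zero this
    · intro i hi
      by_contra hne
      rw [Pi.single_eq_of_ne (fun hh => hne (by rw [hh]; exact hi0)) 1] at hi
      exact hi rfl
  refine le_trans h1 (le_trans hammingNorm_le_card_fintype ?_)
  simp

lemma specSet_bddAbove {N K : ℕ} (G : Matrix (Fin N) (Fin N) F2) (hK : 1 ≤ K) :
    BddAbove {d | ∃ I : Finset (Fin N), I.card = K ∧ minDist G I = d} := by
  refine ⟨N, fun d hd => ?_⟩
  obtain ⟨I, hcard, rfl⟩ := hd
  exact minDist_le_N G I (Finset.card_pos.mp (by omega))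

lemma minDist_le_spec {N : ℕ} (G : Matrix (Fin N) (Fin N) F2) (I : Finset (Fin N))
    (hI : I.Nonempty) : minDist G I ≤ spec G I.card :=
  le_csSup (specSet_bddAbove G (Finset.card_pos.mpr hI)) ⟨I, rfl, rfl⟩

lemma minDist_anti {N : ℕ} (G : Matrix (Fin N) (Fin N) F2) {I J : Finset (Fin N)}
    (hIJ : I ⊆ J) (hI : I.Nonempty) : minDist G J ≤ minDist G I := by
  obtain ⟨u, hu, hsupp, heq⟩ := minDist_attained G I hI
  rw [← heq]
  exact minDist_le_norm G J u hu (fun i hi => hIJ (hsupp i hi))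

lemma spec_anti {N : ℕ} (G : Matrix (Fin N) (Fin N) F2) {K K' : ℕ}
    (h1 : 1 ≤ K) (h2 : K ≤ K') (h3 : K' ≤ N) : spec G K' ≤ spec G K := by
  have hne : {d | ∃ I : Finset (Fin N), I.card = K' ∧ minDist G I = d}.Nonempty := by
    obtain ⟨I, hI1, hI2⟩ := Finset.exists_subset_card_eq (s := (Finset.univ : Finset (Fin N))) (n := K')
      (by simpa using h3)
    exact ⟨_, I, hI2, rfl⟩
  apply csSup_le hne
  intro d hd
  obtain ⟨I', hcard, rfl⟩ := hd
  obtain ⟨I, hsub, hcardI⟩ := Finset.exists_subset_card_eq (s := I') (n := K) (by omega)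
  refine le_trans (minDist_anti G hsub (Finset.card_pos.mp (by omega))) ?_
  calc minDist G I ≤ spec G I.card := minDist_le_spec G I (Finset.card_pos.mp (by omega))
  _ = spec G K := by rw [hcardI]

/-! ### Generic Kronecker-step decomposition -/

section step

variable {m M : ℕ} (hm : 0 < m) (hM : M = 2 * m)
  (B : Matrix (Fin m) (Fin m) F2) (G : Matrix (Fin M) (Fin M) F2)
  (hG : ∀ (i j : Fin M) (h1 : i.val / m < 2) (h2 : j.val / m < 2)
      (h3 : i.val % m < m) (h4 : j.val % m < m),
      G i j = T2 ⟨i.val / m, h1⟩ ⟨j.val / m, h2⟩ * B ⟨i.val % m, h3⟩ ⟨j.val % m, h4⟩)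

include hm hM hG

lemma Gent : ∀ (i j : Fin M),
    G i j = if hi : i.val < m then
        (if hj : j.val < m then B ⟨i.val, hi⟩ ⟨j.val, hj⟩ else 0)
      else
        (if hj : j.val < m then B ⟨i.val - m, by have := i.isLt; omega⟩ ⟨j.val, hj⟩
         else B ⟨i.val - m, by have := i.isLt; omega⟩ ⟨j.val - m, by have := j.isLt; omega⟩) := by
  intro i j
  have hiM := i.isLt
  have hjM := j.isLt
  have hd : ∀ (x : Fin M), x.val / m < 2 := by
    intro x; rw [Nat.div_lt_iff_lt_mul hm]; have := x.isLt; omega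
  rw [hG i j (hd i) (hd j) (Nat.mod_lt _ hm) (Nat.mod_lt _ hm)]
  have hdiv : ∀ (x : Fin M), x.val / m = if x.val < m then 0 else 1 := by
    intro x
    split
    · exact Nat.div_eq_of_lt ‹_›
    · refine Nat.div_eq_of_lt_le (by omega) (by have := x.isLt; omega)
  have hmod : ∀ (x : Fin M), x.val % m = if x.val < m then x.val else x.val - m := by
    intro x
    split
    · exact Nat.mod_eq_of_lt ‹_›
    · rw [Nat.mod_eq_sub_mod (by omega)]
      exact Nat.mod_eq_of_lt (by have := x.isLt; omega)
  by_cases hi : i.val < m <;> by_cases hj : j.val < m <;>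
    simp only [hdiv, hmod, hi, hj, if_true, if_false, dif_pos, dif_neg, not_true, not_false_iff] <;>
    simp [T2_eval, Fin.mk_zero, Fin.mk_one, one_mul]

lemma vecMul_step_apply (u : Fin M → F2) (j : Fin M) :
    Matrix.vecMul u G j =
      if h : j.val < m then
        Matrix.vecMul ((fun r : Fin m => u ⟨r.val, by have := r.isLt; omega⟩)
          + (fun r : Fin m => u ⟨m + r.val, by have := r.isLt; omega⟩)) B ⟨j.val, h⟩
      else Matrix.vecMul (fun r : Fin m => u ⟨m + r.val, by have := r.isLt; omega⟩) B
        ⟨j.val - m, by have := j.isLt; omega⟩ := by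
  have hge := Gent hm hM B G hG
  have hsum : ∀ f : Fin M → F2, ∑ i, f i
      = ∑ r : Fin m, f ⟨r.val, by have := r.isLt; omega⟩
        + ∑ r : Fin m, f ⟨m + r.val, by have := r.isLt; omega⟩ := by
    intro f
    rw [← Equiv.sum_comp (finCongr (by omega : m + m = M)) f, Fin.sum_univ_add]
    congr 1 <;> apply Finset.sum_congr rfl <;> intro r _ <;> congr 1 <;> ext <;> simp
  rw [vecMul_apply, hsum]
  by_cases h : j.val < m
  · rw [dif_pos h, vecMul_apply]
    have t1 : ∀ r : Fin m, u ⟨r.val, by have := r.isLt; omega⟩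
        * G ⟨r.val, by have := r.isLt; omega⟩ j
        = u ⟨r.val, by have := r.isLt; omega⟩ * B r ⟨j.val, h⟩ := by
      intro r
      rw [hge]
      have hr := r.isLt
      rw [dif_pos (show r.val < m from hr), dif_pos h]
    have t2 : ∀ r : Fin m, u ⟨m + r.val, by have := r.isLt; omega⟩
        * G ⟨m + r.val, by have := r.isLt; omega⟩ j
        = u ⟨m + r.val, by have := r.isLt; omega⟩ * B r ⟨j.val, h⟩ := by
      intro r
      rw [hge]
      have hr := r.isLt
      rw [dif_neg (show ¬ (m + r.val < m) by omega), dif_pos h]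
      simp
    simp only [t1, t2]
    rw [← Finset.sum_add_distrib]
    apply Finset.sum_congr rfl
    intro r _
    simp [Pi.add_apply, add_mul]
  · rw [dif_neg h, vecMul_apply]
    have t1 : ∀ r : Fin m, u ⟨r.val, by have := r.isLt; omega⟩
        * G ⟨r.val, by have := r.isLt; omega⟩ j = 0 := by
      intro r
      rw [hge]
      have hr := r.isLt
      rw [dif_pos (show r.val < m from hr), dif_neg h, mul_zero]
    have t2 : ∀ r : Fin m, u ⟨m + r.val, by have := r.isLt; omega⟩
        * G ⟨m + r.val, by have := r.isLt; omega⟩ j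
        = u ⟨m + r.val, by have := r.isLt; omega⟩
          * B r ⟨j.val - m, by have := j.isLt; omega⟩ := by
      intro r
      rw [hge]
      have hr := r.isLt
      rw [dif_neg (show ¬ (m + r.val < m) by omega), dif_neg h]
      simp
    simp only [t1, t2, Finset.sum_const_zero, zero_add]

lemma hammingNorm_step (u : Fin M → F2) :
    hammingNorm (Matrix.vecMul u G) =
      hammingNorm (Matrix.vecMul ((fun r : Fin m => u ⟨r.val, by have := r.isLt; omega⟩)
          + (fun r : Fin m => u ⟨m + r.val, by have := r.isLt; omega⟩)) B)
      + hammingNorm (Matrix.vecMul (fun r : Fin m => u ⟨m + r.val, by have := r.isLt; omega⟩) B) := by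
  have key := vecMul_step_apply hm hM B G hG u
  rw [hn_eq, hn_eq, hn_eq]
  rw [← Finset.card_filter_add_card_filter_not (s := Finset.univ.filter
      (fun j : Fin M => Matrix.vecMul u G j ≠ 0)) (p := fun j => j.val < m)]
  congr 1
  · apply Finset.card_bij (fun (j : Fin M) hj => (⟨j.val, by
      simp only [Finset.mem_filter] at hj; exact hj.2⟩ : Fin m))
    · intro a ha
      simp only [Finset.mem_filter, Finset.mem_univ, true_and] at ha ⊢
      obtain ⟨h1, h2⟩ := ha
      rw [key] at h1
      rwa [dif_pos h2] at h1
    · intro a ha b hb hab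
      simp only [Finset.mem_filter] at ha hb
      apply Fin.ext
      have := congrArg Fin.val hab
      simpa using this
    · intro b hb
      simp only [Finset.mem_filter, Finset.mem_univ, true_and] at hb
      refine ⟨⟨b.val, by have := b.isLt; omega⟩, ?_, by ext; rfl⟩
      simp only [Finset.mem_filter, Finset.mem_univ, true_and]
      have hbm : (b : ℕ) < m := b.isLt
      constructor
      · rw [key, dif_pos hbm]
        convert hb using 2
      · exact hbm
  · apply Finset.card_bij (fun (j : Fin M) hj => (⟨j.val - m, by
      have := j.isLt; omega⟩ : Fin m))
    · intro a ha
      simp only [Finset.mem_filter, Finset.mem_univ, true_and, not_lt] at ha ⊢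
      obtain ⟨h1, h2⟩ := ha
      rw [key] at h1
      rwa [dif_neg (by omega)] at h1
    · intro a ha b hb hab
      simp only [Finset.mem_filter, Finset.mem_univ, true_and, not_lt] at ha hb
      apply Fin.ext
      have := congrArg Fin.val hab
      simp only at this
      omega
    · intro b hb
      simp only [Finset.mem_filter, Finset.mem_univ, true_and] at hb
      refine ⟨⟨m + b.val, by have := b.isLt; omega⟩, ?_, by ext; simp⟩
      simp only [Finset.mem_filter, Finset.mem_univ, true_and, not_lt]
      constructor
      · rw [key, dif_neg (not_lt.mpr (Nat.le_add_right m b.val))]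
        convert hb using 2
        ext; simp
      · exact Nat.le_add_right m b.val

lemma minDist_step_low (I : Finset (Fin M)) (I0 : Finset (Fin m))
    (hI0 : ∀ r : Fin m, r ∈ I0 ↔ ∃ h : (r : ℕ) < M, (⟨r.val, h⟩ : Fin M) ∈ I)
    (hne : I0.Nonempty) : minDist G I ≤ minDist B I0 := by
  obtain ⟨u0, hu0, hsupp0, heq0⟩ := minDist_attained B I0 hne
  set u : Fin M → F2 := fun i => if h : i.val < m then u0 ⟨i.val, h⟩ else 0 with hu
  have hv0 : (fun r : Fin m => u ⟨r.val, by have := r.isLt; omega⟩) = u0 := by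
    funext r
    simp only [hu]
    rw [dif_pos r.isLt]
  have hv1 : (fun r : Fin m => u ⟨m + r.val, by have := r.isLt; omega⟩) = 0 := by
    funext r
    simp only [hu]
    rw [dif_neg (by omega)]
    rfl
  have hnorm := hammingNorm_step hm hM B G hG u
  rw [hv0, hv1, add_zero, Matrix.zero_vecMul, hammingNorm_zero, add_zero, heq0] at hnorm
  rw [← hnorm]
  apply minDist_le_norm
  · intro h
    apply hu0
    funext r
    have := congrFun h ⟨r.val, by have := r.isLt; omega⟩
    simpa only [hu, dif_pos r.isLt, Pi.zero_apply] using this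
  · intro i hi
    simp only [hu] at hi
    by_cases h : i.val < m
    · rw [dif_pos h] at hi
      have := hsupp0 _ hi
      rw [hI0] at this
      obtain ⟨hh, hmem⟩ := this
      have hee : (⟨(⟨i.val, h⟩ : Fin m).val, hh⟩ : Fin M) = i := by ext; rfl
      exact hee ▸ hmem
    · rw [dif_neg h] at hi
      exact absurd rfl hi

lemma minDist_step_high (I : Finset (Fin M)) (I1 : Finset (Fin m))
    (hI1 : ∀ r : Fin m, r ∈ I1 ↔ ∃ h : m + (r : ℕ) < M, (⟨m + r.val, h⟩ : Fin M) ∈ I)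
    (hne : I1.Nonempty) : minDist G I ≤ 2 * minDist B I1 := by
  obtain ⟨u1, hu1, hsupp1, heq1⟩ := minDist_attained B I1 hne
  set u : Fin M → F2 := fun i => if h : m ≤ i.val then u1 ⟨i.val - m, by have := i.isLt; omega⟩
    else 0 with hu
  have hv0 : (fun r : Fin m => u ⟨r.val, by have := r.isLt; omega⟩) = 0 := by
    funext r
    simp only [hu]
    rw [dif_neg (by have := r.isLt; omega)]
    rfl
  have hv1 : (fun r : Fin m => u ⟨m + r.val, by have := r.isLt; omega⟩) = u1 := by
    funext r
    simp only [hu]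
    rw [dif_pos (Nat.le_add_right m r.val)]
    congr 1
    ext; simp
  have hnorm := hammingNorm_step hm hM B G hG u
  rw [hv0, hv1, zero_add, heq1] at hnorm
  rw [two_mul, ← hnorm]
  apply minDist_le_norm
  · intro h
    apply hu1
    funext r
    have := congrFun h ⟨m + r.val, by have := r.isLt; omega⟩
    simp only [hu, Pi.zero_apply] at this ⊢
    rw [dif_pos (Nat.le_add_right m r.val)] at this
    convert this using 2
    ext; simp
  · intro i hi
    simp only [hu] at hi
    by_cases h : m ≤ i.val
    · rw [dif_pos h] at hi
      have := hsupp1 _ hi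
      rw [hI1] at this
      obtain ⟨hh, hmem⟩ := this
      convert hmem using 1
      ext; simp; omega
    · rw [dif_neg h] at hi
      exact absurd rfl hi

omit hm hM hG
lemma two_mul_eq (a : ℕ) : 2 * a = a + a := by omega

end step

/-! ### The weight function and the Reed-Muller style lower bound -/

def myWt : ℕ → ℕ → ℕ
  | 0, _ => 0
  | (n+1), i => i / 2^n + myWt n (i % 2^n)

lemma myWt_low {n b : ℕ} (h : b < 2^n) : myWt (n+1) b = myWt n b := by
  show b / 2^n + myWt n (b % 2^n) = myWt n b
  rw [Nat.div_eq_of_lt h, Nat.mod_eq_of_lt h, Nat.zero_add]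

lemma myWt_high {n b : ℕ} (h : b < 2^n) : myWt (n+1) (2^n + b) = 1 + myWt n b := by
  show (2^n + b) / 2^n + myWt n ((2^n + b) % 2^n) = 1 + myWt n b
  rw [Nat.add_comm (2^n) b, Nat.add_div_right _ (pow_pos (by norm_num : (0:ℕ) < 2) n),
    Nat.add_mod_right, Nat.div_eq_of_lt h, Nat.mod_eq_of_lt h]

lemma T2pow_entry (n : ℕ) : ∀ (i j : Fin (2^(n+1)))
    (h1 : i.val / 2^n < 2) (h2 : j.val / 2^n < 2)
    (h3 : i.val % 2^n < 2^n) (h4 : j.val % 2^n < 2^n),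
    T2pow (n+1) i j = T2 ⟨i.val / 2^n, h1⟩ ⟨j.val / 2^n, h2⟩
      * T2pow n ⟨i.val % 2^n, h3⟩ ⟨j.val % 2^n, h4⟩ := by
  intro i j h1 h2 h3 h4
  show (kron T2 (T2pow n)) (Fin.cast _ i) (Fin.cast _ j) = _
  unfold kron
  congr 1

lemma LB : ∀ (n : ℕ) (u : Fin (2^n) → F2), u ≠ 0 →
    ∃ b : Fin (2^n), u b ≠ 0 ∧ 2^(myWt n b.val) ≤ hammingNorm (Matrix.vecMul u (T2pow n))
      ∧ ∀ b' : Fin (2^n), u b' ≠ 0 → myWt n b.val ≤ myWt n b'.val := by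
  intro n
  induction n with
  | zero =>
    intro u hu
    obtain ⟨b, hb⟩ := Function.ne_iff.mp hu
    refine ⟨b, hb, ?_, fun b' _ => le_refl _⟩
    have h1 : Matrix.vecMul u (T2pow 0) = u := by
      rw [show T2pow 0 = (1 : Matrix (Fin (2^0)) (Fin (2^0)) F2) from rfl, Matrix.vecMul_one]
    rw [h1]
    have hne : hammingNorm u ≠ 0 := by rw [Ne, hammingNorm_eq_zero]; exact hu
    exact Nat.one_le_iff_ne_zero.mpr hne
  | succ n ih =>
    intro u hu
    have hm : 0 < 2^n := pow_pos (by norm_num : (0:ℕ) < 2) n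
    have hM : 2^(n+1) = 2 * 2^n := by rw [pow_succ]; ring
    set v0 : Fin (2^n) → F2 := fun r => u ⟨r.val, by have := r.isLt; omega⟩ with hv0
    set v1 : Fin (2^n) → F2 := fun r => u ⟨2^n + r.val, by have := r.isLt; omega⟩ with hv1
    have hnorm := hammingNorm_step hm hM (T2pow n) (T2pow (n+1)) (T2pow_entry n) u
    rw [← hv0, ← hv1] at hnorm
    -- candidate production
    have produce : (∃ bc : Fin (2^(n+1)), u bc ≠ 0
          ∧ 2^(myWt (n+1) bc.val) ≤ hammingNorm (Matrix.vecMul u (T2pow (n+1)))) →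
        ∃ b : Fin (2^(n+1)), u b ≠ 0
          ∧ 2^(myWt (n+1) b.val) ≤ hammingNorm (Matrix.vecMul u (T2pow (n+1)))
          ∧ ∀ b' : Fin (2^(n+1)), u b' ≠ 0 → myWt (n+1) b.val ≤ myWt (n+1) b'.val := by
      rintro ⟨bc, hbc, hle⟩
      obtain ⟨b, hb, hbmin⟩ := Finset.exists_min_image
        (Finset.univ.filter (fun b => u b ≠ 0)) (fun b => myWt (n+1) b.val)
        ⟨bc, by simp [hbc]⟩
      simp only [Finset.mem_filter, Finset.mem_univ, true_and] at hb
      refine ⟨b, hb, ?_, ?_⟩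
      · refine le_trans (Nat.pow_le_pow_right (by norm_num) ?_) hle
        exact hbmin bc (by simp [hbc])
      · intro b' hb'
        exact hbmin b' (by simp [hb'])
    apply produce
    by_cases h1 : v1 = 0
    · have h0 : v0 ≠ 0 := by
        intro h0
        apply hu
        funext i
        by_cases h : i.val < 2^n
        · have := congrFun h0 ⟨i.val, h⟩
          simpa only [hv0, Fin.eta, Pi.zero_apply] using this
        · have := congrFun h1 ⟨i.val - 2^n, by have := i.isLt; omega⟩
          simp only [hv1, Pi.zero_apply] at this
          rw [show (⟨2^n + (i.val - 2^n), by have := i.isLt; omega⟩ : Fin (2^(n+1))) = i from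
            by ext; simp; omega] at this
          exact this
      obtain ⟨b0, hb0, hb0le, _⟩ := ih v0 h0
      refine ⟨⟨b0.val, by have := b0.isLt; omega⟩, hb0, ?_⟩
      rw [myWt_low b0.isLt]
      rw [h1, add_zero, Matrix.zero_vecMul, hammingNorm_zero, add_zero] at hnorm
      rw [hnorm]
      exact hb0le
    · obtain ⟨b1, hb1, hb1le, hb1min⟩ := ih v1 h1
      by_cases h01 : v0 + v1 = 0
      · have hvv : ∀ r, v0 r = v1 r := by
          intro r
          have := congrFun h01 r
          simp only [Pi.add_apply, Pi.zero_apply] at this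
          have h2 : v0 r = - v1 r := eq_neg_of_add_eq_zero_left this
          rw [h2, CharTwo.neg_eq]
        refine ⟨⟨b1.val, by have := b1.isLt; omega⟩, ?_, ?_⟩
        · show u ⟨b1.val, _⟩ ≠ 0
          have : v0 b1 ≠ 0 := by rw [hvv]; exact hb1
          exact this
        · rw [myWt_low b1.isLt]
          rw [h01, Matrix.zero_vecMul, hammingNorm_zero, zero_add] at hnorm
          rw [hnorm]
          exact hb1le
      · obtain ⟨b0, hb0, hb0le, _⟩ := ih (v0 + v1) h01
        by_cases hvb0 : v0 b0 ≠ 0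
        · refine ⟨⟨b0.val, by have := b0.isLt; omega⟩, hvb0, ?_⟩
          rw [myWt_low b0.isLt, hnorm]
          exact le_trans hb0le (Nat.le_add_right _ _)
        · push_neg at hvb0
          have hv1b0 : v1 b0 ≠ 0 := by
            intro hz
            apply hb0
            simp [Pi.add_apply, hvb0, hz]
          have hminle : myWt n b1.val ≤ myWt n b0.val := hb1min b0 hv1b0
          refine ⟨⟨2^n + b1.val, by have := b1.isLt; omega⟩, hb1, ?_⟩
          rw [myWt_high b1.isLt, hnorm]
          have e1 : (2:ℕ)^(1 + myWt n b1.val) = 2^(myWt n b1.val) + 2^(myWt n b1.val) := by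
            rw [pow_add]; ring
          rw [e1]
          have h2 : 2^(myWt n b1.val) ≤ hammingNorm (Matrix.vecMul (v0 + v1) (T2pow n)) :=
            le_trans (Nat.pow_le_pow_right (by norm_num) hminle) hb0le
          exact Nat.add_le_add h2 hb1le

/-! ### Achievability: spectrum of `T2pow` dominates sorted row weights -/

def powP (n : ℕ) : Multiset ℕ :=
  (Finset.univ : Finset (Fin (2^n))).val.map (fun b => 2^(myWt n b.val))

lemma card_powP (n : ℕ) : Multiset.card (powP n) = 2^n := by
  simp [powP]

lemma kth_powP_le_spec (n : ℕ) {i : ℕ} (hi : i < 2^n) :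
    kthLargest (powP n) (i+1) ≤ spec (T2pow n) (i+1) := by
  set q := kthLargest (powP n) (i+1) with hq
  have hcnt : i + 1 ≤ cnt q (powP n) :=
    cnt_ge_of_le_kthLargest (by rw [card_powP]; omega) (le_refl q)
  have hcard : i + 1 ≤ ((Finset.univ : Finset (Fin (2^n))).filter
      (fun b => q ≤ 2^(myWt n b.val))).card := by
    refine le_trans hcnt (le_of_eq ?_)
    rw [cnt, powP, Multiset.countP_map]
    rfl
  obtain ⟨I, hIsub, hIcard⟩ := Finset.exists_subset_card_eq hcard
  have hIne : I.Nonempty := Finset.card_pos.mp (by omega)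
  have hqI : ∀ b ∈ I, q ≤ 2^(myWt n b.val) := by
    intro b hb
    have := hIsub hb
    simp only [Finset.mem_filter] at this
    exact this.2
  have hle : q ≤ minDist (T2pow n) I := by
    obtain ⟨u, hu, hsupp, heq⟩ := minDist_attained (T2pow n) I hIne
    obtain ⟨b, hb, hble, _⟩ := LB n u hu
    calc q ≤ 2^(myWt n b.val) := hqI b (hsupp b hb)
    _ ≤ hammingNorm (Matrix.vecMul u (T2pow n)) := hble
    _ = minDist (T2pow n) I := heq
  refine le_trans hle ?_
  have := minDist_le_spec (T2pow n) I hIne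
  rwa [hIcard] at this

/-! ### The product multiset bookkeeping -/

section withTp

variable {p : ℕ} (hp : 1 ≤ p) (Tp : Matrix (Fin p) (Fin p) F2)

def gcnt (Tp : Matrix (Fin p) (Fin p) F2) (m a : ℕ) : ℕ :=
  ((Finset.univ : Finset (Fin p)).filter (fun j => m ≤ a * spec Tp (j.val+1))).card

lemma gcnt_mono (Tp : Matrix (Fin p) (Fin p) F2) (m : ℕ) {a a' : ℕ} (h : a ≤ a') :
    gcnt Tp m a ≤ gcnt Tp m a' := by
  apply Finset.card_le_card
  apply Finset.monotone_filter_right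
  intro j _ hj
  exact le_trans hj (Nat.mul_le_mul_right _ h)

def DL (Tp : Matrix (Fin p) (Fin p) F2) : ℕ → List ℕ
  | 0 => (List.finRange p).map (fun j => spec Tp (j.val+1))
  | (n+1) => DL Tp n ++ (DL Tp n).map (2 * ·)

lemma DL_length (Tp : Matrix (Fin p) (Fin p) F2) (n : ℕ) : (DL Tp n).length = 2^n * p := by
  induction n with
  | zero => simp [DL]
  | succ n ih =>
    show (DL Tp n ++ (DL Tp n).map (2 * ·)).length = _
    rw [List.length_append, List.length_map, ih, pow_succ]
    ring

lemma cnt_list_eq_gcnt (Tp : Matrix (Fin p) (Fin p) F2) (m a : ℕ) :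
    ((List.finRange p).map (fun j => a * spec Tp (j.val+1))).countP (fun x => decide (m ≤ x))
      = gcnt Tp m a := by
  have h1 : (↑((List.finRange p).map (fun j => a * spec Tp (j.val+1))) : Multiset ℕ)
      = ((Finset.univ : Finset (Fin p)).val.map (fun j => a * spec Tp (j.val+1))) := by
    rw [Fin.univ_def]
    rfl
  have h2 := congrArg (Multiset.countP (fun x => m ≤ x)) h1
  rw [Multiset.coe_countP] at h2
  rw [h2, Multiset.countP_map]
  rfl

lemma countP_double (l : List ℕ) (m : ℕ) :
    (l.map (2 * ·)).countP (fun x => decide (m ≤ x))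
      = l.countP (fun x => decide ((m+1)/2 ≤ x)) := by
  rw [List.countP_map]
  apply List.countP_congr
  intro x _
  simp only [Function.comp]
  simp only [decide_eq_true_eq]
  omega

lemma cnt_DL (Tp : Matrix (Fin p) (Fin p) F2) (n : ℕ) : ∀ (m : ℕ),
    (DL Tp n).countP (fun x => decide (m ≤ x))
      = ∑ b ∈ Finset.range (2^n), gcnt Tp m (2^(myWt n b)) := by
  induction n with
  | zero =>
    intro m
    show ((List.finRange p).map (fun j => spec Tp (j.val+1))).countP _ = _
    rw [pow_zero, Finset.sum_range_one]
    have : (List.finRange p).map (fun j => spec Tp (j.val+1))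
        = (List.finRange p).map (fun j => 2^(myWt 0 0) * spec Tp (j.val+1)) := by
      apply List.map_congr_left
      intro j _
      show spec Tp (j.val+1) = 2^(0:ℕ) * spec Tp (j.val+1)
      rw [pow_zero, one_mul]
    rw [this, cnt_list_eq_gcnt]
  | succ n ih =>
    intro m
    show (DL Tp n ++ (DL Tp n).map (2 * ·)).countP _ = _
    rw [List.countP_append, ih m, countP_double, ih ((m+1)/2)]
    have hsplit : ∑ b ∈ Finset.range (2^(n+1)), gcnt Tp m (2^(myWt (n+1) b))
        = ∑ b ∈ Finset.range (2^n), gcnt Tp m (2^(myWt (n+1) b))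
          + ∑ b ∈ Finset.range (2^n), gcnt Tp m (2^(myWt (n+1) (2^n + b))) := by
      have h2 : 2^(n+1) = 2^n + 2^n := by rw [pow_succ]; ring
      rw [h2, Finset.sum_range_add]
    rw [hsplit]
    congr 1
    · apply Finset.sum_congr rfl
      intro b hb
      rw [myWt_low (Finset.mem_range.mp hb)]
    · apply Finset.sum_congr rfl
      intro b hb
      rw [myWt_high (Finset.mem_range.mp hb)]
      have : (2:ℕ)^(1 + myWt n b) = 2 * 2^(myWt n b) := by
        rw [pow_add, pow_one]
      rw [this]
      have hgg : ∀ a, gcnt Tp ((m+1)/2) a = gcnt Tp m (2 * a) := by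
        intro a
        unfold gcnt
        congr 1
        apply Finset.filter_congr
        intro j _
        rw [mul_assoc 2 a]
        omega
      rw [hgg]

def specMS (Tp : Matrix (Fin p) (Fin p) F2) (n : ℕ) : Multiset ℕ :=
  ((Finset.univ : Finset (Fin (2^n) × Fin p)).val).map
    (fun ij => spec (T2pow n) (ij.1.val + 1) * spec Tp (ij.2.val + 1))

lemma cnt_specMS (Tp : Matrix (Fin p) (Fin p) F2) (n : ℕ) (m : ℕ) :
    cnt m (specMS Tp n) = ∑ i ∈ Finset.range (2^n), gcnt Tp m (spec (T2pow n) (i+1)) := by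
  rw [cnt, specMS, Multiset.countP_map]
  have h1 : ((Finset.univ : Finset (Fin (2^n) × Fin p)).val.filter
      (fun ij => m ≤ spec (T2pow n) (ij.1.val + 1) * spec Tp (ij.2.val + 1)))
      = ((Finset.univ : Finset (Fin (2^n) × Fin p)).filter
      (fun ij => m ≤ spec (T2pow n) (ij.1.val + 1) * spec Tp (ij.2.val + 1))).val := rfl
  rw [h1]
  have h2 : (((Finset.univ : Finset (Fin (2^n) × Fin p)).filter
      (fun ij => m ≤ spec (T2pow n) (ij.1.val + 1) * spec Tp (ij.2.val + 1))).val).card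
      = ((Finset.univ : Finset (Fin (2^n) × Fin p)).filter
      (fun ij => m ≤ spec (T2pow n) (ij.1.val + 1) * spec Tp (ij.2.val + 1))).card := rfl
  rw [h2, Finset.card_filter]
  rw [← Finset.univ_product_univ, Finset.sum_product]
  rw [← Fin.sum_univ_eq_sum_range (fun i => gcnt Tp m (spec (T2pow n) (i+1)))]
  apply Finset.sum_congr rfl
  intro i _
  rw [gcnt, Finset.card_filter]

lemma list_sum_getD : ∀ (l : List ℕ) (g : ℕ → ℕ),
    (l.map g).sum = ∑ i ∈ Finset.range l.length, g (l.getD i 0) := by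
  intro l
  induction l with
  | nil => simp
  | cons a t ih =>
    intro g
    rw [List.map_cons, List.sum_cons, List.length_cons, Finset.sum_range_succ', ih g]
    simp only [List.getD_cons_succ, List.getD_cons_zero]
    ring

lemma cnt_DL_le_cnt_specMS (Tp : Matrix (Fin p) (Fin p) F2) (n : ℕ) (m : ℕ) :
    cnt m ↑(DL Tp n) ≤ cnt m (specMS Tp n) := by
  rw [cnt_coe, cnt_DL, cnt_specMS]
  -- express the LHS sum through the sorted list of powP n
  set l := ((powP n).sort (· ≤ ·)).reverse with hl
  have hll : l.length = 2^n := by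
    rw [hl, List.length_reverse, Multiset.length_sort, card_powP]
  have hsum1 : ∑ b ∈ Finset.range (2^n), gcnt Tp m (2^(myWt n b))
      = (l.map (gcnt Tp m)).sum := by
    have e1 : ∑ b ∈ Finset.range (2^n), gcnt Tp m (2^(myWt n b))
        = ∑ b : Fin (2^n), gcnt Tp m (2^(myWt n b.val)) :=
      (Fin.sum_univ_eq_sum_range (fun b => gcnt Tp m (2^(myWt n b))) (2^n)).symm
    have e2 : ∑ b : Fin (2^n), gcnt Tp m (2^(myWt n b.val))
        = ((powP n).map (gcnt Tp m)).sum := by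
      rw [powP, Multiset.map_map]
      rfl
    have e3 : ((powP n).map (gcnt Tp m)).sum = ((↑l : Multiset ℕ).map (gcnt Tp m)).sum := by
      congr 1
      rw [hl, Multiset.coe_reverse, Multiset.sort_eq]
    rw [e1, e2, e3]
    rfl
  rw [hsum1, list_sum_getD, hll]
  apply Finset.sum_le_sum
  intro i hi
  have hi' := Finset.mem_range.mp hi
  have hkth : l.getD i 0 = kthLargest (powP n) (i+1) := by
    rw [kthLargest, Nat.add_sub_cancel]
  rw [hkth]
  exact gcnt_mono Tp m (kth_powP_le_spec n hi')

/-! ### Entry identities for the iterated Kronecker product -/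

lemma kron_succ_entry (hp : 1 ≤ p) (Tp : Matrix (Fin p) (Fin p) F2) (n : ℕ) :
    ∀ (i j : Fin (2^(n+1) * p)) (h1 : i.val / (2^n * p) < 2) (h2 : j.val / (2^n * p) < 2)
      (h3 : i.val % (2^n * p) < 2^n * p) (h4 : j.val % (2^n * p) < 2^n * p),
    kron (T2pow (n+1)) Tp i j = T2 ⟨i.val / (2^n * p), h1⟩ ⟨j.val / (2^n * p), h2⟩
      * kron (T2pow n) Tp ⟨i.val % (2^n * p), h3⟩ ⟨j.val % (2^n * p), h4⟩ := by
  intro i j h1 h2 h3 h4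
  have hdd : ∀ (x : Fin (2^(n+1) * p)), x.val / p / 2^n = x.val / (2^n * p) := by
    intro x
    rw [Nat.div_div_eq_div_mul]
    exact congrArg (fun t => x.val / t) (Nat.mul_comm p (2^n))
  have hdm : ∀ (x : Fin (2^(n+1) * p)), x.val / p % 2^n = x.val % (2^n * p) / p := by
    intro x
    rw [Nat.mul_comm (2^n) p, Nat.mod_mul_right_div_self]
  have hmm : ∀ (x : Fin (2^(n+1) * p)), x.val % p = x.val % (2^n * p) % p := by
    intro x
    rw [Nat.mod_mod_of_dvd _ (dvd_mul_left p (2^n))]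
  have hpow : 2^(n+1) = 2 * 2^n := by rw [pow_succ]; ring
  have h2npos : 0 < 2^n := pow_pos (by norm_num : (0:ℕ) < 2) n
  have hdiv2 : (i.divNat : Fin (2^(n+1))).val / 2^n < 2 := by
    rw [Nat.div_lt_iff_lt_mul h2npos]
    have h5 : (i.divNat : Fin (2^(n+1))).val < 2^(n+1) := (i.divNat : Fin (2^(n+1))).isLt
    omega
  have hdiv2' : (j.divNat : Fin (2^(n+1))).val / 2^n < 2 := by
    rw [Nat.div_lt_iff_lt_mul h2npos]
    have h5 : (j.divNat : Fin (2^(n+1))).val < 2^(n+1) := (j.divNat : Fin (2^(n+1))).isLt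
    omega
  have hmod3 : (i.divNat : Fin (2^(n+1))).val % 2^n < 2^n := Nat.mod_lt _ h2npos
  have hmod4 : (j.divNat : Fin (2^(n+1))).val % 2^n < 2^n := Nat.mod_lt _ h2npos
  show T2pow (n+1) i.divNat j.divNat * Tp i.modNat j.modNat = _
  rw [T2pow_entry n i.divNat j.divNat hdiv2 hdiv2' hmod3 hmod4]
  rw [mul_assoc]
  have e1 : (⟨(i.divNat : Fin (2^(n+1))).val / 2^n, hdiv2⟩ : Fin 2)
      = ⟨i.val / (2^n * p), h1⟩ := Fin.ext (hdd i)
  have e2 : (⟨(j.divNat : Fin (2^(n+1))).val / 2^n, hdiv2'⟩ : Fin 2)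
      = ⟨j.val / (2^n * p), h2⟩ := Fin.ext (hdd j)
  have e3 : (⟨(i.divNat : Fin (2^(n+1))).val % 2^n, hmod3⟩ : Fin (2^n))
      = (⟨i.val % (2^n * p), h3⟩ : Fin (2^n * p)).divNat := Fin.ext (hdm i)
  have e4 : (⟨(j.divNat : Fin (2^(n+1))).val % 2^n, hmod4⟩ : Fin (2^n))
      = (⟨j.val % (2^n * p), h4⟩ : Fin (2^n * p)).divNat := Fin.ext (hdm j)
  have e5 : (i.modNat : Fin p) = (⟨i.val % (2^n * p), h3⟩ : Fin (2^n * p)).modNat :=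
    Fin.ext (hmm i)
  have e6 : (j.modNat : Fin p) = (⟨j.val % (2^n * p), h4⟩ : Fin (2^n * p)).modNat :=
    Fin.ext (hmm j)
  rw [e1, e2, e3, e4, e5, e6]
  rfl

lemma kron_zero_entry (hp : 1 ≤ p) (Tp : Matrix (Fin p) (Fin p) F2) :
    ∀ (i j : Fin (2^0 * p)) (h3 : i.val < p) (h4 : j.val < p),
    kron (T2pow 0) Tp i j = Tp ⟨i.val, h3⟩ ⟨j.val, h4⟩ := by
  intro i j h3 h4
  show T2pow 0 i.divNat j.divNat * Tp i.modNat j.modNat = _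
  have h0 : T2pow 0 i.divNat j.divNat = 1 := by
    have hee : (i.divNat : Fin (2^0)) = j.divNat := by
      apply Fin.ext
      have a := (i.divNat : Fin (2^0)).isLt
      have b := (j.divNat : Fin (2^0)).isLt
      omega
    rw [hee]
    show (1 : Matrix (Fin (2^0)) (Fin (2^0)) F2) _ _ = 1
    rw [Matrix.one_apply_eq]
  have e5 : (i.modNat : Fin p) = ⟨i.val, h3⟩ := Fin.ext (Nat.mod_eq_of_lt h3)
  have e6 : (j.modNat : Fin p) = ⟨j.val, h4⟩ := Fin.ext (Nat.mod_eq_of_lt h4)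
  rw [h0, one_mul, e5, e6]

/-! ### Base case -/

lemma minDist_base (hp : 1 ≤ p) (Tp : Matrix (Fin p) (Fin p) F2)
    (I : Finset (Fin (2^0 * p))) (hne : I.Nonempty) :
    minDist (kron (T2pow 0) Tp) I ≤ spec Tp I.card := by
  have hpv : ∀ (x : Fin (2^0 * p)), x.val < p := by
    intro x; have := x.isLt; omega
  set f : Fin (2^0 * p) → Fin p := fun i => ⟨i.val, hpv i⟩ with hf
  have hfinj : Function.Injective f := by
    intro a b hab
    have h := congrArg Fin.val hab
    exact Fin.ext h
  set I' : Finset (Fin p) := I.image f with hI'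
  have hcard : I'.card = I.card := Finset.card_image_of_injective I hfinj
  have hne' : I'.Nonempty := hne.image f
  obtain ⟨u', hu', hsupp', heq'⟩ := minDist_attained Tp I' hne'
  set u : Fin (2^0 * p) → F2 := fun i => u' (f i) with hu
  have hvec : ∀ j : Fin (2^0 * p), Matrix.vecMul u (kron (T2pow 0) Tp) j
      = Matrix.vecMul u' Tp (f j) := by
    intro j
    rw [vecMul_apply, vecMul_apply]
    rw [← Equiv.sum_comp (finCongr (by omega : 2^0 * p = p))
      (fun i' : Fin p => u' i' * Tp i' (f j))]
    apply Finset.sum_congr rfl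
    intro i _
    rw [kron_zero_entry hp Tp i j (hpv i) (hpv j)]
    rfl
  have hnorm : hammingNorm (Matrix.vecMul u (kron (T2pow 0) Tp))
      = hammingNorm (Matrix.vecMul u' Tp) := by
    rw [hn_eq, hn_eq]
    apply Finset.card_bij (fun j _ => f j)
    · intro a ha
      simp only [Finset.mem_filter, Finset.mem_univ, true_and] at ha ⊢
      rwa [hvec] at ha
    · intro a _ b _ hab
      exact hfinj hab
    · intro b hb
      simp only [Finset.mem_filter, Finset.mem_univ, true_and] at hb
      refine ⟨⟨b.val, by have := b.isLt; omega⟩, ?_, by ext; rfl⟩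
      simp only [Finset.mem_filter, Finset.mem_univ, true_and]
      rw [hvec]
      convert hb using 2
  have hle : minDist (kron (T2pow 0) Tp) I ≤ minDist Tp I' := by
    rw [← heq', ← hnorm]
    apply minDist_le_norm
    · intro h
      apply hu'
      funext r
      have := congrFun h ⟨r.val, by have := r.isLt; omega⟩
      simp only [hu, Pi.zero_apply] at this ⊢
      rw [show f ⟨r.val, by have := r.isLt; omega⟩ = r from by ext; rfl] at this
      exact this
    · intro i hi
      simp only [hu] at hi
      have := hsupp' _ hi
      rw [hI'] at this
      obtain ⟨x, hx, hfx⟩ := Finset.mem_image.mp this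
      have : x = i := hfinj hfx
      rwa [← this]
  refine le_trans hle ?_
  rw [← hcard]
  exact minDist_le_spec Tp I' hne'

lemma card_filter_lt (K : ℕ) (hK : K ≤ p) :
    ((Finset.univ : Finset (Fin p)).filter (fun j => j.val < K)).card = K := by
  have h : ((Finset.univ : Finset (Fin p)).filter (fun j => j.val < K)).card
      = (Finset.univ : Finset (Fin K)).card := by
    apply Finset.card_bij (fun (j : Fin p) hj => (⟨j.val, (Finset.mem_filter.mp hj).2⟩ : Fin K))
    · intro a _; exact Finset.mem_univ _
    · intro a _ b _ hab
      have h2 := congrArg Fin.val hab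
      exact Fin.ext h2
    · intro b _
      refine ⟨⟨b.val, by have := b.isLt; omega⟩, ?_, by apply Fin.ext; rfl⟩
      simp only [Finset.mem_filter, Finset.mem_univ, true_and]
      exact b.isLt
  rw [h, Finset.card_univ, Fintype.card_fin]

lemma DL0_cnt_ge (hp : 1 ≤ p) (Tp : Matrix (Fin p) (Fin p) F2) {K : ℕ} (hK1 : 1 ≤ K)
    (hKp : K ≤ p) : K ≤ cnt (spec Tp K) ↑(DL Tp 0) := by
  rw [cnt_coe]
  show K ≤ ((List.finRange p).map (fun j => spec Tp (j.val+1))).countP _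
  have h1 : (↑((List.finRange p).map (fun j => spec Tp (j.val+1))) : Multiset ℕ)
      = ((Finset.univ : Finset (Fin p)).val.map (fun j => spec Tp (j.val+1))) := by
    rw [Fin.univ_def]; rfl
  have h2 := congrArg (Multiset.countP (fun x => spec Tp K ≤ x)) h1
  rw [Multiset.coe_countP] at h2
  rw [h2, Multiset.countP_map]
  have h3 : ((Finset.univ : Finset (Fin p)).filter (fun j => j.val < K)).card
      ≤ Multiset.card ((Finset.univ : Finset (Fin p)).val.filter
        (fun j => spec Tp K ≤ spec Tp (j.val+1))) := by
    show _ ≤ ((Finset.univ : Finset (Fin p)).filter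
        (fun j => spec Tp K ≤ spec Tp (j.val+1))).card
    apply Finset.card_le_card
    apply Finset.monotone_filter_right
    intro j _ hj
    exact spec_anti Tp (by omega) (by omega : j.val + 1 ≤ K) hKp
  rw [card_filter_lt K hKp] at h3
  exact h3

/-! ### The main induction -/

lemma main_ind (hp : 1 ≤ p) (Tp : Matrix (Fin p) (Fin p) F2) : ∀ (n : ℕ)
    (I : Finset (Fin (2^n * p))), I.Nonempty →
    minDist (kron (T2pow n) Tp) I ≤ kthLargest ↑(DL Tp n) I.card := by
  intro n
  induction n with
  | zero =>
    intro I hne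
    have hK1 : 1 ≤ I.card := Finset.card_pos.mpr hne
    have hKp : I.card ≤ p := by
      have := Finset.card_le_univ I
      simpa using this
    refine le_trans (minDist_base hp Tp I hne) ?_
    exact le_kthLargest_of_cnt hK1 (DL0_cnt_ge hp Tp hK1 hKp)
  | succ n ih =>
    intro I hne
    set m := 2^n * p with hm'
    have hm : 0 < m := by positivity
    have hM : 2^(n+1) * p = 2 * m := by rw [hm', pow_succ]; ring
    set I0 : Finset (Fin m) := Finset.univ.filter
      (fun r : Fin m => (⟨r.val, by have := r.isLt; omega⟩ : Fin (2^(n+1) * p)) ∈ I) with hI0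
    set I1 : Finset (Fin m) := Finset.univ.filter
      (fun r : Fin m => (⟨m + r.val, by have := r.isLt; omega⟩ : Fin (2^(n+1) * p)) ∈ I) with hI1
    -- card split
    have hcards : I.card = I0.card + I1.card := by
      rw [← Finset.card_filter_add_card_filter_not
        (s := I) (p := fun i => i.val < m)]
      congr 1
      · apply Finset.card_bij (fun (i : Fin (2^(n+1) * p)) hi =>
          (⟨i.val, (Finset.mem_filter.mp hi).2⟩ : Fin m))
        · intro a ha
          simp only [hI0, Finset.mem_filter, Finset.mem_univ, true_and] at ha ⊢
          exact ha.1
        · intro a _ b _ hab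
          have h2 := congrArg Fin.val hab
          exact Fin.ext h2
        · intro b hb
          simp only [hI0, Finset.mem_filter, Finset.mem_univ, true_and] at hb
          refine ⟨⟨b.val, by have := b.isLt; omega⟩, ?_, by ext; rfl⟩
          simp only [Finset.mem_filter]
          exact ⟨hb, b.isLt⟩
      · apply Finset.card_bij (fun (i : Fin (2^(n+1) * p)) hi =>
          (⟨i.val - m, by have := i.isLt; omega⟩ : Fin m))
        · intro a ha
          simp only [hI1, Finset.mem_filter, Finset.mem_univ, true_and, not_lt] at ha ⊢
          have hma : m ≤ a.val := ha.2
          convert ha.1 using 1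
          apply Fin.ext
          show m + (a.val - m) = a.val
          omega
        · intro a ha b hb hab
          simp only [Finset.mem_filter, not_lt] at ha hb
          apply Fin.ext
          have := congrArg Fin.val hab
          simp only at this
          omega
        · intro b hb
          simp only [hI1, Finset.mem_filter, Finset.mem_univ, true_and] at hb
          refine ⟨⟨m + b.val, by have := b.isLt; omega⟩, ?_, by ext; simp⟩
          simp only [Finset.mem_filter, not_lt]
          exact ⟨hb, Nat.le_add_right _ _⟩
    -- the two step bounds
    have hGent := kron_succ_entry hp Tp n
    have hbound0 : I0.Nonempty →
        minDist (kron (T2pow (n+1)) Tp) I ≤ minDist (kron (T2pow n) Tp) I0 := by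
      intro h
      apply minDist_step_low hm hM (kron (T2pow n) Tp) (kron (T2pow (n+1)) Tp) hGent I I0 _ h
      intro r
      simp only [hI0, Finset.mem_filter, Finset.mem_univ, true_and]
      constructor
      · intro hh; exact ⟨by have := r.isLt; omega, hh⟩
      · rintro ⟨_, hh⟩; exact hh
    have hbound1 : I1.Nonempty →
        minDist (kron (T2pow (n+1)) Tp) I ≤ 2 * minDist (kron (T2pow n) Tp) I1 := by
      intro h
      apply minDist_step_high hm hM (kron (T2pow n) Tp) (kron (T2pow (n+1)) Tp) hGent I I1 _ h
      intro r
      simp only [hI1, Finset.mem_filter, Finset.mem_univ, true_and]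
      constructor
      · intro hh; exact ⟨by have := r.isLt; omega, hh⟩
      · rintro ⟨_, hh⟩; exact hh
    -- counting
    set X := minDist (kron (T2pow (n+1)) Tp) I with hX
    have hcnt0 : I0.card ≤ cnt X ↑(DL Tp n) := by
      rcases Finset.eq_empty_or_nonempty I0 with h | h
      · simp [h]
      · have hXle : X ≤ kthLargest ↑(DL Tp n) I0.card := le_trans (hbound0 h) (ih I0 h)
        apply cnt_ge_of_le_kthLargest _ hXle
        rw [Multiset.coe_card, DL_length]
        have := Finset.card_le_univ I0
        simpa [hm'] using this
    have hcnt1 : I1.card ≤ Multiset.countP (fun x => X ≤ x) ↑((DL Tp n).map (2 * ·)) := by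
      rcases Finset.eq_empty_or_nonempty I1 with h | h
      · simp [h]
      · have hXle : X ≤ 2 * kthLargest ↑(DL Tp n) I1.card :=
          le_trans (hbound1 h) (Nat.mul_le_mul_left 2 (ih I1 h))
        have hXle2 : (X+1)/2 ≤ kthLargest ↑(DL Tp n) I1.card := by omega
        have h4 : I1.card ≤ cnt ((X+1)/2) ↑(DL Tp n) := by
          apply cnt_ge_of_le_kthLargest _ hXle2
          rw [Multiset.coe_card, DL_length]
          have := Finset.card_le_univ I1
          simpa [hm'] using this
        refine le_trans h4 (le_of_eq ?_)
        rw [cnt_coe, Multiset.coe_countP, countP_double]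
    refine le_kthLargest_of_cnt (Finset.card_pos.mpr hne) ?_
    have hDL : (DL Tp (n+1) : Multiset ℕ) = ↑(DL Tp n) + ↑((DL Tp n).map (2 * ·)) := by
      show ((DL Tp n ++ (DL Tp n).map (2 * ·) : List ℕ) : Multiset ℕ) = _
      rw [← Multiset.coe_add]
    rw [hDL, hcards]
    unfold cnt
    rw [Multiset.countP_add]
    exact Nat.add_le_add hcnt0 hcnt1

end withTp

theorem minDist_le_kron_spectrum
    (p : ℕ) (hp : 1 ≤ p) (Tp : Matrix (Fin p) (Fin p) F2) (hTp : IsUnit Tp)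
    (n : ℕ) (K : ℕ) (hK1 : 1 ≤ K) (hK2 : K ≤ 2 ^ n * p) :
    ∀ I : Finset (Fin (2 ^ n * p)), I.card = K →
      minDist (kron (T2pow n) Tp) I ≤
        kthLargest
          (((Finset.univ : Finset (Fin (2 ^ n) × Fin p)).val).map
            (fun ij => spec (T2pow n) (ij.1.val + 1) * spec Tp (ij.2.val + 1))) K := by
  intro I hcard
  have hne : I.Nonempty := Finset.card_pos.mp (by omega)
  have h1 : minDist (kron (T2pow n) Tp) I ≤ kthLargest ↑(DL Tp n) K := by
    have := main_ind hp Tp n I hne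
    rwa [hcard] at this
  refine le_trans h1 ?_
  have h2 : K ≤ cnt (kthLargest ↑(DL Tp n) K) ↑(DL Tp n) := by
    apply cnt_ge_of_le_kthLargest _ (le_refl _)
    rw [Multiset.coe_card, DL_length]
    exact hK2
  have h3 : K ≤ cnt (kthLargest ↑(DL Tp n) K) (specMS Tp n) :=
    le_trans h2 (cnt_DL_le_cnt_specMS Tp n _)
  exact le_kthLargest_of_cnt hK1 h3

end
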